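/- Let n ≥ 3 be an integer, ℓ > 0, β ∈ ℝ, m ∈ ℝ, and let r : (a,b) → (0,∞) be a differentiable function satisfying f(r(x)) > 0 and r'(x) = r(x)·√(f(r(x))) for all x, where f(ρ) = β − 2m/ρ^{n−2} − ρ²/ℓ². Set φ(x) = r(x)^{(n−2)/2}. Then for every x ∈ (a,b) the first integral of the Yamabe equation takes the value ½ φ'(x)² − ((n−2)²β/8) φ(x)² + ((n−2)²/(8ℓ²)) φ(x)^{2n/(n−2)} = −((n−2)²/4)·m. In particular the mass parameter m is, up to the factor −(n−2)²/4, the constant of motion of the spherically-symmetric Yamabe equation. -/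

import Mathlib

/-- The mass parameter `m` is (up to the factor `−(n−2)²/4`) the constant of
motion of the spherically-symmetric Yamabe equation: under `r' = r·√(f(r))` with
`f(ρ) = β − 2m/ρ^(n−2) − ρ²/ℓ²` and `φ = r^((n−2)/2)`, one has
`½ φ'² − ((n−2)²β/8) φ² + ((n−2)²/(8ℓ²)) φ^(2n/(n−2)) = −((n−2)²/4)·m`. -/
theorem birmingham_yamabe_constant_of_motion (n : ℕ) (hn : 3 ≤ n)
    (ℓ β m a b : ℝ) (hℓ : 0 < ℓ) (r : ℝ → ℝ)
    (hpos : ∀ x ∈ Set.Ioo a b, 0 < r x)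
    (hf : ∀ x ∈ Set.Ioo a b, 0 < β - 2 * m / (r x) ^ (n - 2) - (r x) ^ 2 / ℓ ^ 2)
    (hder : ∀ x ∈ Set.Ioo a b,
      HasDerivAt r (r x * Real.sqrt (β - 2 * m / (r x) ^ (n - 2) - (r x) ^ 2 / ℓ ^ 2)) x) :
    ∀ x ∈ Set.Ioo a b,
      (1 / 2) * (deriv (fun x => (r x) ^ (((n : ℝ) - 2) / 2)) x) ^ 2
        - (((n : ℝ) - 2) ^ 2 * β / 8) * ((r x) ^ (((n : ℝ) - 2) / 2)) ^ 2
        + (((n : ℝ) - 2) ^ 2 / (8 * ℓ ^ 2))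
          * ((r x) ^ (((n : ℝ) - 2) / 2)) ^ ((2 * (n : ℝ)) / ((n : ℝ) - 2))
      = -(((n : ℝ) - 2) ^ 2 / 4) * m := by
  intro x hx
  have hρ := hpos x hx
  have hF := hf x hx
  set c : ℝ := ((n : ℝ) - 2) / 2 with hc
  have h2 : (2 : ℕ) ≤ n := by omega
  have hn2 : ((n - 2 : ℕ) : ℝ) = (n : ℝ) - 2 := by
    push_cast [Nat.cast_sub h2]; ring
  have hne : (n : ℝ) - 2 ≠ 0 := by
    have : (3:ℝ) ≤ (n:ℝ) := by exact_mod_cast hn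
    linarith
  set F : ℝ := β - 2 * m / (r x) ^ (n - 2) - (r x) ^ 2 / ℓ ^ 2 with hFdef
  have hd : HasDerivAt (fun x => (r x) ^ c)
      ((r x * Real.sqrt F) * c * (r x) ^ (c - 1)) x :=
    (hder x hx).rpow_const (Or.inl hρ.ne')
  rw [hd.deriv]
  have hrc : r x * r x ^ (c - 1) = r x ^ c := by
    have h := Real.rpow_add hρ 1 (c - 1)
    rw [Real.rpow_one] at h
    rw [← h]; ring_nf
  have hP2 : (r x ^ c) ^ 2 = r x ^ (n - 2 : ℕ) := by
    rw [sq, ← Real.rpow_add hρ]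
    rw [show c + c = ((n - 2 : ℕ) : ℝ) by rw [hn2, hc]; ring]
    exact Real.rpow_natCast _ _
  have hPq : (r x ^ c) ^ ((2 * (n : ℝ)) / ((n : ℝ) - 2)) = r x ^ (n : ℕ) := by
    rw [← Real.rpow_natCast (r x) n, ← Real.rpow_mul hρ.le]
    congr 1
    field_simp [hc]
    ring
  have hsq : Real.sqrt F ^ 2 = F := Real.sq_sqrt hF.le
  have key : F * r x ^ (n - 2 : ℕ) = β * r x ^ (n - 2 : ℕ) - 2 * m - r x ^ (n : ℕ) / ℓ ^ 2 := by
    have hpow : r x ^ (n - 2 : ℕ) * r x ^ 2 = r x ^ (n : ℕ) := by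
      rw [← pow_add]; congr 1; omega
    have hrn : (r x) ^ (n-2:ℕ) ≠ 0 := pow_ne_zero _ hρ.ne'
    rw [hFdef]; field_simp
    ring_nf
    rw [← hpow]
    ring
  calc (1 / 2) * ((r x * Real.sqrt F) * c * (r x) ^ (c - 1)) ^ 2
        - (((n : ℝ) - 2) ^ 2 * β / 8) * ((r x) ^ c) ^ 2
        + (((n : ℝ) - 2) ^ 2 / (8 * ℓ ^ 2)) * ((r x) ^ c) ^ ((2 * (n : ℝ)) / ((n : ℝ) - 2))
      = (1 / 2) * c ^ 2 * Real.sqrt F ^ 2 * (r x ^ c) ^ 2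
        - (((n : ℝ) - 2) ^ 2 * β / 8) * ((r x) ^ c) ^ 2
        + (((n : ℝ) - 2) ^ 2 / (8 * ℓ ^ 2)) * ((r x) ^ c) ^ ((2 * (n : ℝ)) / ((n : ℝ) - 2)) := by
        rw [← hrc]; ring
    _ = (1 / 2) * c ^ 2 * (F * r x ^ (n - 2 : ℕ))
        - (((n : ℝ) - 2) ^ 2 * β / 8) * r x ^ (n - 2 : ℕ)
        + (((n : ℝ) - 2) ^ 2 / (8 * ℓ ^ 2)) * r x ^ (n : ℕ) := by
        rw [hP2, hPq, hsq]; ring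
    _ = -(((n : ℝ) - 2) ^ 2 / 4) * m := by
        rw [key, hc]
        field_simp
        ring
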